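/- Let ε > 0 and let X be a real symmetric positive semidefinite n×n matrix. Then every diagonal entry of the matrix (XXᵀ + εI)⁻²·X is nonnegative. -/

import Mathlib

open Matrix

lemma psd_diag_nonneg {n : ℕ} {M : Matrix (Fin n) (Fin n) ℝ} (hM : M.PosSemidef)
    (i : Fin n) : 0 ≤ M i i := by
  exact hM.diag_nonneg

/-- Second step of the proof of Theorem 3.1: for `ε > 0` and a real symmetric PSD
`n×n` matrix `X`, every diagonal entry of `(XXᵀ + εI)⁻²·X` is nonnegative. -/
theorem diag_nonneg_singular_value_gradient
    {n : ℕ} (ε : ℝ) (hε : 0 < ε)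
    (X : Matrix (Fin n) (Fin n) ℝ) (hX : X.PosSemidef) :
    ∀ i : Fin n, 0 ≤ ((((X * Xᵀ + ε • 1)⁻¹) ^ 2) * X) i i := by
  intro i
  have hXs : Xᵀ = X := by
    have := hX.isHermitian
    rwa [Matrix.IsHermitian, conjTranspose_eq_transpose_of_trivial] at this
  set A : Matrix (Fin n) (Fin n) ℝ := X * Xᵀ + ε • 1 with hAdef
  have hXXt : (X * Xᵀ).PosSemidef := by
    have := posSemidef_self_mul_conjTranspose X
    rwa [conjTranspose_eq_transpose_of_trivial] at this
  have hone : ((ε • 1 : Matrix (Fin n) (Fin n) ℝ)).PosDef := by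
    rw [smul_one_eq_diagonal]
    exact Matrix.PosDef.diagonal fun _ => hε
  have hA : A.PosDef := by
    refine Matrix.PosDef.of_dotProduct_mulVec_pos (hXXt.isHermitian.add hone.isHermitian) fun x hx => ?_
    rw [add_mulVec, dotProduct_add]
    exact add_pos_of_nonneg_of_pos (hXXt.dotProduct_mulVec_nonneg x) (hone.dotProduct_mulVec_pos hx)
  have hAinv : (A⁻¹).PosDef := hA.inv
  have hAunit : IsUnit A.det := (Matrix.isUnit_iff_isUnit_det A).mp hA.isUnit
  have hcomm : Commute X A := by
    have h1 : Commute X (X * Xᵀ) := by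
      rw [hXs]; exact (Commute.refl X).mul_right (Commute.refl X)
    have h2 : Commute X (ε • (1 : Matrix (Fin n) (Fin n) ℝ)) :=
      (Commute.one_right X).smul_right ε
    exact h1.add_right h2
  have hcommInv : X * A⁻¹ = A⁻¹ * X := by
    calc X * A⁻¹ = A⁻¹ * (A * X) * A⁻¹ := by
          rw [← Matrix.mul_assoc, Matrix.nonsing_inv_mul _ hAunit, Matrix.one_mul]
      _ = A⁻¹ * (X * A) * A⁻¹ := by rw [← hcomm.eq]
      _ = A⁻¹ * X := by
          rw [Matrix.mul_assoc, Matrix.mul_assoc, Matrix.mul_nonsing_inv _ hAunit,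
            Matrix.mul_one]
  have key : ((A⁻¹) ^ 2) * X = (A⁻¹)ᴴ * X * A⁻¹ := by
    have hherm : (A⁻¹)ᴴ = A⁻¹ := hAinv.isHermitian
    rw [hherm, pow_two, Matrix.mul_assoc A⁻¹ X A⁻¹, hcommInv, ← Matrix.mul_assoc]
  rw [key]
  exact psd_diag_nonneg (hX.conjTranspose_mul_mul_same A⁻¹) i
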